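/- Let A be a unital, not necessarily associative ring with involution *, let α be an invertible element of Z(A) with α* = α, and let R = (A,α) be the Cayley–Dickson ring. Set C = Z(A), I = {c ∈ C : c[a,b] = 0 for all a,b ∈ A}, B = {c ∈ C : c* = c}, and J = {b ∈ B : b(a − a*) = 0 for all a ∈ A}. Then R is centrally essential if and only if (i) for every nonzero a ∈ A there exists b ∈ B with ba ≠ 0 and ba ∈ B, and (ii) I ∩ J is an essential ideal of the commutative associative ring B. -/
import Mathlib


set_option linter.unusedSectionVars false

/-- The associator `(a,b,c) = (ab)c - a(bc)` in a not necessarily associative ring. -/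
def naAssociator {R : Type*} [NonAssocRing R] (a b c : R) : R := a * b * c - a * (b * c)

/-- The commutator `[a,b] = ab - ba` in a not necessarily associative ring. -/
def naCommutator {R : Type*} [NonAssocRing R] (a b : R) : R := a * b - b * a

/-- The associative center `N(R)`. -/
def assocCenter (R : Type*) [NonAssocRing R] : Set R :=
  {x | ∀ a b : R, naAssociator x a b = 0 ∧ naAssociator a x b = 0 ∧ naAssociator a b x = 0}

/-- The commutative center `K(R)`. -/
def commCenter (R : Type*) [NonAssocRing R] : Set R :=
  {x | ∀ a : R, naCommutator x a = 0}

/-- The center `Z(R) = N(R) ∩ K(R)`. -/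
def ringCenter (R : Type*) [NonAssocRing R] : Set R :=
  assocCenter R ∩ commCenter R

/-- A ring is centrally essential if for every nonzero `r` there is a central `z`
with `z * r ≠ 0` central. -/
def IsCentrallyEssential (R : Type*) [NonAssocRing R] : Prop :=
  ∀ r : R, r ≠ 0 → ∃ z ∈ ringCenter R, z * r ≠ 0 ∧ z * r ∈ ringCenter R

/-- A ring is left `N`-essential. -/
def IsLeftNEssential (R : Type*) [NonAssocRing R] : Prop :=
  ∀ r : R, r ≠ 0 → ∃ n ∈ assocCenter R, n * r ≠ 0 ∧ n * r ∈ assocCenter R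

/-- A ring is right `N`-essential. -/
def IsRightNEssential (R : Type*) [NonAssocRing R] : Prop :=
  ∀ r : R, r ≠ 0 → ∃ n ∈ assocCenter R, r * n ≠ 0 ∧ r * n ∈ assocCenter R

/-- `I` is an essential ideal of `B` (elementwise formulation). -/
def EssentialIn {R : Type*} [NonAssocRing R] (I B : Set R) : Prop :=
  ∀ b ∈ B, b ≠ 0 → ∃ d ∈ B, d * b ≠ 0 ∧ d * b ∈ I

/-- The Cayley–Dickson ring `(A, α)`: the abelian group `A ⊕ A` with multiplication
`(a₁,a₂)(a₃,a₄) = (a₁a₃ + α(a₄a₂*), a₁*a₄ + a₃a₂)`. -/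
@[ext]
structure CD (A : Type*) (α : A) : Type _ where
  re : A
  im : A

namespace CD

variable {A : Type*} [NonAssocRing A] [StarRing A] {α : A}

instance : Zero (CD A α) := ⟨⟨0, 0⟩⟩
instance : Add (CD A α) := ⟨fun z w => ⟨z.re + w.re, z.im + w.im⟩⟩
instance : Neg (CD A α) := ⟨fun z => ⟨-z.re, -z.im⟩⟩
instance : One (CD A α) := ⟨⟨1, 0⟩⟩
instance : Mul (CD A α) :=
  ⟨fun z w => ⟨z.re * w.re + α * (w.im * star z.im), star z.re * w.im + w.re * z.im⟩⟩
instance : Star (CD A α) := ⟨fun z => ⟨star z.re, -z.im⟩⟩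

@[simp] theorem zero_re : (0 : CD A α).re = 0 := rfl
@[simp] theorem zero_im : (0 : CD A α).im = 0 := rfl
@[simp] theorem one_re : (1 : CD A α).re = 1 := rfl
@[simp] theorem one_im : (1 : CD A α).im = 0 := rfl
@[simp] theorem add_re (z w : CD A α) : (z + w).re = z.re + w.re := rfl
@[simp] theorem add_im (z w : CD A α) : (z + w).im = z.im + w.im := rfl
@[simp] theorem neg_re (z : CD A α) : (-z).re = -z.re := rfl
@[simp] theorem neg_im (z : CD A α) : (-z).im = -z.im := rfl
@[simp] theorem mul_re (z w : CD A α) :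
    (z * w).re = z.re * w.re + α * (w.im * star z.im) := rfl
@[simp] theorem mul_im (z w : CD A α) :
    (z * w).im = star z.re * w.im + w.re * z.im := rfl
@[simp] theorem star_re (z : CD A α) : (star z).re = star z.re := rfl
@[simp] theorem star_im (z : CD A α) : (star z).im = -z.im := rfl
@[simp] theorem mk_re (x y : A) : (⟨x, y⟩ : CD A α).re = x := rfl
@[simp] theorem mk_im (x y : A) : (⟨x, y⟩ : CD A α).im = y := rfl

instance : NonAssocRing (CD A α) where
  add_assoc a b c := by ext <;> simp [add_assoc]
  zero_add a := by ext <;> simp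
  add_zero a := by ext <;> simp
  add_comm a b := by ext <;> simp [add_comm]
  neg_add_cancel a := by ext <;> simp
  nsmul := nsmulRec
  zsmul := zsmulRec
  left_distrib a b c := by ext <;> simp [mul_add, add_mul] <;> abel
  right_distrib a b c := by ext <;> simp [mul_add, add_mul, star_add] <;> abel
  zero_mul a := by ext <;> simp
  mul_zero a := by ext <;> simp
  one_mul a := by ext <;> simp
  mul_one a := by ext <;> simp

instance {A : Type*} {α : A} [Finite A] : Finite (CD A α) :=
  Finite.of_injective (fun z : CD A α => (z.re, z.im))
    (fun z w h => by cases z; cases w; simpa using h)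

/-- If `α` commutes with every element and `star α = α`, then `(a,b) ↦ (a*, -b)`
makes `(A, α)` a star ring. -/
def starRing (h : ∀ t : A, α * t = t * α) (hs : star α = α) : StarRing (CD A α) where
  star := star
  star_involutive z := by ext <;> simp
  star_mul z w := by
    ext <;>
      simp [StarMul.star_mul, star_star, StarAddMonoid.star_add, star_neg, hs, h, mul_neg, neg_mul,
        neg_add] <;>
      abel
  star_add z w := by ext <;> simp [StarAddMonoid.star_add, neg_add] <;> abel

/-- An element of the form `(x, 0)` with `x` commuting with everything and `star x = x`
commutes with every element of `(A, α)`. -/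
theorem mk_zero_comm {x : A} (hx : ∀ t : A, x * t = t * x) (hsx : star x = x) (z : CD A α) :
    (⟨x, 0⟩ : CD A α) * z = z * ⟨x, 0⟩ := by
  ext <;> simp [hsx, hx]

end CD

section AuxNA
variable {A : Type*} [NonAssocRing A]

theorem rc_a1 {c : A} (hc : c ∈ ringCenter A) (a b : A) : c * a * b = c * (a * b) :=
  sub_eq_zero.1 (hc.1 a b).1
theorem rc_a2 {c : A} (hc : c ∈ ringCenter A) (a b : A) : a * c * b = a * (c * b) :=
  sub_eq_zero.1 (hc.1 a b).2.1
theorem rc_a3 {c : A} (hc : c ∈ ringCenter A) (a b : A) : a * b * c = a * (b * c) :=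
  sub_eq_zero.1 (hc.1 a b).2.2
theorem rc_c {c : A} (hc : c ∈ ringCenter A) (a : A) : a * c = c * a :=
  (sub_eq_zero.1 (hc.2 a)).symm  -- hc.2 : commCenter? ringCenter = assocCenter ∩ commCenter; hc.2 a : naCommutator c a = 0

theorem rc_p1 {c : A} (hc : c ∈ ringCenter A) (a b : A) : a * (c * b) = c * (a * b) := by
  rw [← rc_a2 hc, rc_c hc a, rc_a1 hc]
theorem rc_p2 {c : A} (hc : c ∈ ringCenter A) (a b : A) : (a * c) * b = c * (a * b) := by
  rw [rc_c hc a, rc_a1 hc]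
theorem rc_p3 {c : A} (hc : c ∈ ringCenter A) (a b : A) : a * b * c = c * (a * b) := by
  rw [← rc_c hc]
theorem rc_p4 {c : A} (hc : c ∈ ringCenter A) (a b : A) : a * (b * c) = c * (a * b) := by
  rw [← rc_a3 hc, rc_p3 hc]

theorem rc_zero : (0 : A) ∈ ringCenter A := by
  constructor
  · intro a b; simp [naAssociator]
  · intro a; simp [naCommutator]

theorem rc_mul {c d : A} (hc : c ∈ ringCenter A) (hd : d ∈ ringCenter A) :
    c * d ∈ ringCenter A := by
  constructor
  · intro a b
    refine ⟨?_, ?_, ?_⟩ <;> rw [naAssociator, sub_eq_zero]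
    · simp only [rc_a1 hc, rc_a1 hd]
    · simp only [rc_p1 hc, rc_a1 hc, rc_a2 hd]
    · simp only [rc_p1 hc, rc_a3 hd, rc_p1 hd]
  · intro a
    rw [naCommutator, sub_eq_zero, rc_a1 hc, ← rc_c hd a, rc_p1 hc]

end AuxNA

section CDaux
variable {A : Type*} [NonAssocRing A] [StarRing A] {α : A}

theorem CD.sub_re' (z w : CD A α) : (z - w).re = z.re - w.re := by
  rw [sub_eq_add_neg, sub_eq_add_neg]; rfl
theorem CD.sub_im' (z w : CD A α) : (z - w).im = z.im - w.im := by
  rw [sub_eq_add_neg, sub_eq_add_neg]; rfl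

theorem CD.mk_re_mem_center (hαc : α ∈ ringCenter A) (hαs : star α = α)
    {x : A} (hx : x ∈ ringCenter A) (hxs : star x = x) :
    (⟨x, 0⟩ : CD A α) ∈ ringCenter (CD A α) := by
  constructor
  · intro p q
    refine ⟨?_, ?_, ?_⟩ <;>
    · rw [naAssociator, sub_eq_zero]
      refine CD.ext ?_ ?_ <;>
        simp [hxs, hαs, mul_add, add_mul, rc_a1 hx, rc_c hx, rc_p1 hx, rc_p2 hx, rc_p3 hx,
          rc_p4 hx, rc_a1 hαc, rc_p2 hαc]
  · intro p
    rw [naCommutator, sub_eq_zero]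
    refine CD.ext ?_ ?_ <;>
      simp [hxs, hαs, rc_a1 hx, rc_c hx, rc_p1 hx, rc_p2 hx, rc_p3 hx, rc_p4 hx]

end CDaux

section CDaux2
variable {A : Type*} [NonAssocRing A] [StarRing A] {α : A}

theorem CD.mk_im_mem_center (hαc : α ∈ ringCenter A) (hαs : star α = α)
    {y : A} (hy : y ∈ ringCenter A) (hys : star y = y)
    (hyk : ∀ u v : A, y * (u * v) = y * (v * u))
    (hysk : ∀ u : A, y * star u = y * u) :
    (⟨0, y⟩ : CD A α) ∈ ringCenter (CD A α) := by
  have hyl : ∀ u v : A, y * (star u * v) = y * (u * v) := by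
    intro u v; rw [← rc_a1 hy, hysk u, rc_a1 hy]
  have hyr : ∀ u v : A, y * (u * star v) = y * (u * v) := by
    intro u v; rw [hyk, hyl, hyk]
  have hswapd : ∀ a b : A, y * (a * (α * b)) = y * (α * (a * b)) := by
    intro a b; rw [rc_p1 hαc]
  have hykα : ∀ u v : A, y * (α * (u * v)) = y * (α * (v * u)) := by
    intro u v; rw [← hswapd, hyk, rc_a1 hαc]
  have hylα : ∀ u v : A, y * (α * (star u * v)) = y * (α * (u * v)) := by
    intro u v; rw [← rc_a1 hy, ← rc_c hy, rc_a1 hαc, hyl, rc_p1 hy]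
  have hyrα : ∀ u v : A, y * (α * (u * star v)) = y * (α * (u * v)) := by
    intro u v; rw [hykα, hylα, hykα]
  constructor
  · intro p q
    refine ⟨?_, ?_, ?_⟩
    · rw [naAssociator, sub_eq_zero]
      refine CD.ext ?_ ?_
      · simp [hys, hαs, mul_add, add_mul, rc_a1 hy, rc_c hy, rc_p1 hy, rc_p2 hy, rc_p3 hy,
          rc_p4 hy, rc_a1 hαc, rc_p2 hαc, hysk, hyl, hyr, hswapd]
        rw [hykα p.im q.re, hykα q.im p.re]
        try abel
      · simp [hys, hαs, mul_add, add_mul, rc_a1 hy, rc_c hy, rc_p1 hy, rc_p2 hy, rc_p3 hy,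
          rc_p4 hy, rc_a1 hαc, rc_p2 hαc, hysk, hyl, hyr, hswapd]
        rw [hyrα q.im p.im, hykα p.im q.im, hyk q.re p.re]
        try abel
    · rw [naAssociator, sub_eq_zero]
      refine CD.ext ?_ ?_
      · simp [hys, hαs, mul_add, add_mul, rc_a1 hy, rc_c hy, rc_p1 hy, rc_p2 hy, rc_p3 hy,
          rc_p4 hy, rc_a1 hαc, rc_p2 hαc, hysk, hyl, hyr, hswapd]
        rw [hykα p.im q.re, hykα q.im p.re]
        try abel
      · simp [hys, hαs, mul_add, add_mul, rc_a1 hy, rc_c hy, rc_p1 hy, rc_p2 hy, rc_p3 hy,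
          rc_p4 hy, rc_a1 hαc, rc_p2 hαc, hysk, hyl, hyr, hswapd]
        rw [hykα p.im q.im, hyk q.re p.re]
        try abel
    · rw [naAssociator, sub_eq_zero]
      refine CD.ext ?_ ?_
      · simp [hys, hαs, mul_add, add_mul, rc_a1 hy, rc_c hy, rc_p1 hy, rc_p2 hy, rc_p3 hy,
          rc_p4 hy, rc_a1 hαc, rc_p2 hαc, hysk, hyl, hyr, hswapd]
        rw [hykα q.im p.re, hykα p.im q.re]
        try abel
      · simp [hys, hαs, mul_add, add_mul, rc_a1 hy, rc_c hy, rc_p1 hy, rc_p2 hy, rc_p3 hy,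
          rc_p4 hy, rc_a1 hαc, rc_p2 hαc, hysk, hyl, hyr, hswapd]
        rw [hyk (p.im * star q.im) α, hyrα p.im q.im, hykα p.im q.im, hyk q.re p.re]
        try abel
  · intro p
    rw [naCommutator, sub_eq_zero]
    refine CD.ext ?_ ?_ <;>
      simp [hys, hαs, rc_a1 hy, rc_c hy, rc_p1 hy, rc_p2 hy, rc_p3 hy, rc_p4 hy,
        rc_a1 hαc, rc_p2 hαc, hysk, hyl, hyr, hswapd]

end CDaux2

section CDaux3
variable {A : Type*} [NonAssocRing A]

theorem rc_add {c d : A} (hc : c ∈ ringCenter A) (hd : d ∈ ringCenter A) :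
    c + d ∈ ringCenter A := by
  refine ⟨fun a b => ⟨?_, ?_, ?_⟩, fun a => ?_⟩
  · rw [naAssociator, sub_eq_zero]; simp only [add_mul, rc_a1 hc, rc_a1 hd]
  · rw [naAssociator, sub_eq_zero]; simp only [mul_add, add_mul, rc_a2 hc, rc_a2 hd]
  · rw [naAssociator, sub_eq_zero]; simp only [mul_add, rc_a3 hc, rc_a3 hd]
  · rw [naCommutator, sub_eq_zero]; simp only [mul_add, add_mul, ← rc_c hc, ← rc_c hd]

end CDaux3

section CDaux4
variable {A : Type*} [NonAssocRing A] [StarRing A] {α : A}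

theorem CD.mem_center_iff (hαc : α ∈ ringCenter A) (hαu : ∃ β : A, α * β = 1 ∧ β * α = 1)
    (hαs : star α = α) (x y : A) :
    (⟨x, y⟩ : CD A α) ∈ ringCenter (CD A α) ↔
      ((x ∈ ringCenter A ∧ star x = x) ∧
        (y ∈ ringCenter A ∧ star y = y ∧ (∀ u v : A, y * naCommutator u v = 0) ∧
          (∀ u : A, y * (u - star u) = 0))) := by
  constructor
  · intro hz
    have hN := hz.1
    have hK := hz.2
    have hcan : ∀ a b : A, α * a = α * b → a = b := by
      obtain ⟨β, hβ1, hβ2⟩ := hαu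
      intro a b h
      have h2 : β * (α * a) = β * (α * b) := by rw [h]
      rwa [← rc_a2 hαc, ← rc_a2 hαc, hβ2, one_mul, one_mul] at h2
    have e1 : ∀ t : A, x * t = t * x := by
      intro t
      have h := hK ⟨t, 0⟩; rw [naCommutator, sub_eq_zero] at h
      simpa using congrArg CD.re h
    have e2 : ∀ t : A, t * y = star t * y := by
      intro t
      have h := hK ⟨t, 0⟩; rw [naCommutator, sub_eq_zero] at h
      simpa using congrArg CD.im h
    have e4 : ∀ s : A, star x * s = x * s := by
      intro s
      have h := hK ⟨0, s⟩; rw [naCommutator, sub_eq_zero] at h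
      simpa using congrArg CD.im h
    have hxs : star x = x := by simpa using e4 1
    have e3 : ∀ s : A, s * star y = y * star s := by
      intro s
      have h := hK ⟨0, s⟩; rw [naCommutator, sub_eq_zero] at h
      exact hcan _ _ (by simpa using congrArg CD.re h)
    have hys : star y = y := by simpa using e3 1
    have hyK : ∀ s : A, y * s = s * y := by
      intro s
      have h2 : star s * y = y * s := by
        have := e3 (star s); rwa [hys, star_star] at this
      rw [← e2 s] at h2
      exact h2.symm
    have hysk : ∀ u : A, y * star u = y * u := by
      intro u
      have h1 : u * y = y * star u := by have := e3 u; rwa [hys] at this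
      rw [← h1]
      exact (hyK u).symm
    have fa : ∀ a b : A, x * a * b = x * (a * b) := by
      intro a b
      have h := (hN ⟨a, 0⟩ ⟨b, 0⟩).1; rw [naAssociator, sub_eq_zero] at h
      simpa using congrArg CD.re h
    have fa2 : ∀ a b : A, b * (a * y) = a * b * y := by
      intro a b
      have h := (hN ⟨a, 0⟩ ⟨b, 0⟩).1; rw [naAssociator, sub_eq_zero] at h
      simpa using congrArg CD.im h
    have fb : ∀ a b : A, a * x * b = a * (x * b) := by
      intro a b
      have h := (hN ⟨a, 0⟩ ⟨b, 0⟩).2.1; rw [naAssociator, sub_eq_zero] at h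
      simpa using congrArg CD.re h
    have fc : ∀ a b : A, a * b * x = a * (b * x) := by
      intro a b
      have h := (hN ⟨a, 0⟩ ⟨b, 0⟩).2.2; rw [naAssociator, sub_eq_zero] at h
      simpa using congrArg CD.re h
    have g1 : ∀ a t : A, α * (t * (y * a)) = a * (α * (t * y)) := by
      intro a t
      have h := (hN ⟨a, 0⟩ ⟨0, t⟩).2.1; rw [naAssociator, sub_eq_zero] at h
      simpa [hys] using congrArg CD.re h
    have R9 : ∀ a t : A, t * (y * a) = a * (y * t) := by
      intro a t
      apply hcan
      rw [g1, rc_p1 hαc, ← hyK]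
    have h1 : ∀ a s : A, α * (s * y) * a = α * (a * s * y) := by
      intro a s
      have h := (hN ⟨0, s⟩ ⟨a, 0⟩).1; rw [naAssociator, sub_eq_zero] at h
      simpa [hys] using congrArg CD.re h
    have R6 : ∀ a s : A, y * s * a = y * (a * s) := by
      intro a s
      apply hcan
      rw [← rc_a1 hαc, hyK s, h1 a s, ← hyK (a * s)]
    have R1 : ∀ a b : A, b * (y * a) = y * (a * b) := by
      intro a b
      have h := fa2 a b
      rw [← hyK a, ← hyK (a * b)] at h
      exact h
    have hyk2 : ∀ u v : A, y * (u * v) = y * (v * u) := by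
      intro u v
      rw [← R1 u v, R9 u v]
      exact R1 v u
    have hxc : x ∈ ringCenter A :=
      ⟨fun a b => ⟨sub_eq_zero.2 (fa a b), sub_eq_zero.2 (fb a b), sub_eq_zero.2 (fc a b)⟩,
        fun a => sub_eq_zero.2 (e1 a)⟩
    have hyc : y ∈ ringCenter A := by
      refine ⟨fun a b => ⟨?_, ?_, ?_⟩, fun a => ?_⟩
      · rw [naAssociator, sub_eq_zero, R6 b a]
        exact hyk2 b a
      · rw [naAssociator, sub_eq_zero, ← hyK a, R6 b a, R1 b a]
      · rw [naAssociator, sub_eq_zero, ← hyK (a * b), ← hyK b, R1 b a]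
        exact hyk2 a b
      · rw [naCommutator, sub_eq_zero]
        exact hyK a
    refine ⟨⟨hxc, hxs⟩, hyc, hys, fun u v => ?_, fun u => ?_⟩
    · rw [naCommutator, mul_sub, hyk2, sub_self]
    · rw [mul_sub, hysk, sub_self]
  · rintro ⟨⟨hx, hxs⟩, hy, hys, hyki, hyskw⟩
    have hyk : ∀ u v : A, y * (u * v) = y * (v * u) := by
      intro u v
      have := hyki u v
      rw [naCommutator, mul_sub, sub_eq_zero] at this
      exact this
    have hysk : ∀ u : A, y * star u = y * u := by
      intro u
      have := hyskw u
      rw [mul_sub, sub_eq_zero] at this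
      exact this.symm
    have hsplit : (⟨x, y⟩ : CD A α) = ⟨x, 0⟩ + ⟨0, y⟩ := by ext <;> simp
    rw [hsplit]
    exact rc_add (CD.mk_re_mem_center hαc hαs hx hxs)
      (CD.mk_im_mem_center hαc hαs hy hys hyk hysk)

end CDaux4

section CDaux5
variable {A : Type*} [NonAssocRing A] [StarRing A]

theorem rc_mul_IJ {b e : A} (hbC : b ∈ ringCenter A) (hbs : star b = b)
    (heC : e ∈ ringCenter A) (hes : star e = e)
    (hek : ∀ u v : A, e * naCommutator u v = 0)
    (hesk : ∀ u : A, e * (u - star u) = 0) :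
    b * e ∈ ringCenter A ∧ star (b * e) = b * e ∧
      (∀ u v : A, b * e * naCommutator u v = 0) ∧ ∀ u : A, b * e * (u - star u) = 0 := by
  refine ⟨rc_mul hbC heC, ?_, fun u v => ?_, fun u => ?_⟩
  · rw [star_mul, hbs, hes, rc_c hbC]
  · rw [rc_a1 hbC, hek, mul_zero]
  · rw [rc_a1 hbC, hesk, mul_zero]

theorem zero_IJ : (0 : A) ∈ ringCenter A ∧ star (0 : A) = 0 ∧
    (∀ u v : A, (0 : A) * naCommutator u v = 0) ∧ ∀ u : A, (0 : A) * (u - star u) = 0 :=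
  ⟨rc_zero, star_zero _, fun _ _ => zero_mul _, fun _ => zero_mul _⟩

end CDaux5

theorem stmt4 {A : Type*} [NonAssocRing A] [StarRing A] {α : A}
    (hαc : α ∈ ringCenter A) (hαu : ∃ β : A, α * β = 1 ∧ β * α = 1) (hαs : star α = α) :
    IsCentrallyEssential (CD A α) ↔
      (∀ a : A, a ≠ 0 →
          ∃ b ∈ {c : A | c ∈ ringCenter A ∧ star c = c},
            b * a ≠ 0 ∧ b * a ∈ {c : A | c ∈ ringCenter A ∧ star c = c}) ∧
        EssentialIn
          ({c : A | c ∈ ringCenter A ∧ ∀ u v : A, c * naCommutator u v = 0} ∩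
            {c : A | (c ∈ ringCenter A ∧ star c = c) ∧ ∀ u : A, c * (u - star u) = 0})
          {c : A | c ∈ ringCenter A ∧ star c = c} := by
  constructor
  · intro hce
    constructor
    · -- condition (i)
      intro a ha
      obtain ⟨z, hz, hzr, hzrC⟩ := hce ⟨a, 0⟩ (fun h => ha (congrArg CD.re h))
      obtain ⟨b, c⟩ := z
      have hmul : (⟨b, c⟩ : CD A α) * ⟨a, 0⟩ = ⟨b * a, a * c⟩ := by
        refine CD.ext ?_ ?_ <;> simp
      rw [hmul] at hzr hzrC
      rw [CD.mem_center_iff hαc hαu hαs] at hz hzrC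
      obtain ⟨⟨hbC, hbs⟩, hcC, hcs, hck, hcsk⟩ := hz
      obtain ⟨⟨hbaC, hbas⟩, hacC, hacs, hack, hacsk⟩ := hzrC
      by_cases hba : b * a = 0
      · have hac : a * c ≠ 0 := by
          intro h
          exact hzr (CD.ext (by simpa using hba) (by simpa using h))
        refine ⟨c, ⟨hcC, hcs⟩, ?_, ?_, ?_⟩
        · rw [← rc_c hcC]; exact hac
        · rw [← rc_c hcC]; exact hacC
        · rw [← rc_c hcC]; exact hacs
      · exact ⟨b, ⟨hbC, hbs⟩, hba, hbaC, hbas⟩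
    · -- condition (ii)
      rintro b ⟨hbC, hbs⟩ hb0
      obtain ⟨z, hz, hzr, hzrC⟩ := hce ⟨0, b⟩ (fun h => hb0 (congrArg CD.im h))
      obtain ⟨d, e⟩ := z
      rw [CD.mem_center_iff hαc hαu hαs] at hz
      obtain ⟨⟨hdC, hds⟩, heC, hes, hek, hesk⟩ := hz
      have hmul : (⟨d, e⟩ : CD A α) * ⟨0, b⟩ = ⟨α * (b * e), d * b⟩ := by
        refine CD.ext ?_ ?_ <;> simp [hes, hds]
      rw [hmul] at hzr hzrC
      rw [CD.mem_center_iff hαc hαu hαs] at hzrC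
      obtain ⟨⟨hxC, hxs'⟩, hdbC, hdbs, hdbk, hdbsk⟩ := hzrC
      by_cases hdb : d * b = 0
      · have hbe : b * e ≠ 0 := by
          intro h
          exact hzr (CD.ext (by simp [h]) (by simpa using hdb))
        have heb : e * b ≠ 0 := by rw [← rc_c heC]; exact hbe
        have hIJ := rc_mul_IJ hbC hbs heC hes hek hesk
        have hebIJ : e * b ∈ ringCenter A ∧ star (e * b) = e * b ∧
            (∀ u v : A, e * b * naCommutator u v = 0) ∧
            ∀ u : A, e * b * (u - star u) = 0 := by
          rw [← rc_c heC]; exact hIJ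
        exact ⟨e, ⟨heC, hes⟩, heb, ⟨hebIJ.1, hebIJ.2.2.1⟩, ⟨hebIJ.1, hebIJ.2.1⟩, hebIJ.2.2.2⟩
      · exact ⟨d, ⟨hdC, hds⟩, hdb, ⟨hdbC, hdbk⟩, ⟨hdbC, hdbs⟩, hdbsk⟩
  · rintro ⟨hi, hii⟩
    rintro ⟨r₁, r₂⟩ hr
    by_cases h2 : r₂ = 0
    · have h1 : r₁ ≠ 0 := by
        intro h; exact hr (CD.ext h h2)
      obtain ⟨b, ⟨hbC, hbs⟩, hba, hbaC, hbas⟩ := hi r₁ h1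
      have hm : (⟨b, 0⟩ : CD A α) * ⟨r₁, r₂⟩ = ⟨b * r₁, b * r₂⟩ := by
        refine CD.ext ?_ ?_ <;> simp [hbs]
      refine ⟨⟨b, 0⟩, ?_, ?_, ?_⟩
      · rw [CD.mem_center_iff hαc hαu hαs]
        exact ⟨⟨hbC, hbs⟩, zero_IJ⟩
      · rw [hm]
        intro h; exact hba (congrArg CD.re h)
      · rw [hm, CD.mem_center_iff hαc hαu hαs]
        refine ⟨⟨hbaC, hbas⟩, ?_⟩
        rw [h2, mul_zero]
        exact zero_IJ
    · obtain ⟨b, ⟨hbC, hbs⟩, hbr2, hbr2C, hbr2s⟩ := hi r₂ h2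
      obtain ⟨d, ⟨hdC, hds⟩, hd0, hdI, hdJ⟩ := hii (b * r₂) ⟨hbr2C, hbr2s⟩ hbr2
      have hcC : d * b ∈ ringCenter A := rc_mul hdC hbC
      have hcs : star (d * b) = d * b := by rw [star_mul, hds, hbs, rc_c hdC]
      have hcr2 : d * b * r₂ = d * (b * r₂) := rc_a1 hdC b r₂
      have hdIJ : d * (b * r₂) ∈ ringCenter A ∧ star (d * (b * r₂)) = d * (b * r₂) ∧
          (∀ u v : A, d * (b * r₂) * naCommutator u v = 0) ∧
          ∀ u : A, d * (b * r₂) * (u - star u) = 0 :=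
        ⟨hdI.1, hdJ.1.2, hdI.2, hdJ.2⟩
      by_cases hcr1 : d * b * r₁ = 0
      · have hm : (⟨d * b, 0⟩ : CD A α) * ⟨r₁, r₂⟩ = ⟨d * b * r₁, d * b * r₂⟩ := by
          refine CD.ext ?_ ?_ <;> simp [hcs]
        refine ⟨⟨d * b, 0⟩, ?_, ?_, ?_⟩
        · rw [CD.mem_center_iff hαc hαu hαs]
          exact ⟨⟨hcC, hcs⟩, zero_IJ⟩
        · rw [hm]
          intro h
          apply hd0
          rw [← hcr2]
          exact congrArg CD.im h
        · rw [hm, CD.mem_center_iff hαc hαu hαs]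
          rw [hcr1, hcr2]
          exact ⟨⟨rc_zero, star_zero _⟩, hdIJ⟩
      · obtain ⟨b', ⟨hb'C, hb's⟩, hb'0, hb'aC, hb'as⟩ := hi (d * b * r₁) hcr1
        have hm : (⟨b' * (d * b), 0⟩ : CD A α) * ⟨r₁, r₂⟩ =
            ⟨b' * (d * b * r₁), b' * (d * (b * r₂))⟩ := by
          refine CD.ext ?_ ?_ <;>
            simp [star_mul, hb's, hcs, rc_c hb'C, rc_a1 hb'C, hcr2]
        refine ⟨⟨b' * (d * b), 0⟩, ?_, ?_, ?_⟩
        · rw [CD.mem_center_iff hαc hαu hαs]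
          refine ⟨⟨rc_mul hb'C hcC, ?_⟩, zero_IJ⟩
          rw [star_mul, hb's, hcs, rc_c hb'C]
        · rw [hm]
          intro h; exact hb'0 (congrArg CD.re h)
        · rw [hm, CD.mem_center_iff hαc hαu hαs]
          have hIJ := rc_mul_IJ hb'C hb's hdIJ.1 hdIJ.2.1 hdIJ.2.2.1 hdIJ.2.2.2
          exact ⟨⟨hb'aC, hb'as⟩, hIJ⟩
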